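/- Matroid characterization, necessity direction: if the unit vector e_k lies in the diagonal Graver cone D(A), then there exist two distinct matroid-circuits C, E of A with C ∩ E = {k}. -/
import Mathlib


open Matrix BigOperators

/-- The conformal order on `ℤ^n`. -/
def ConformalLE {n : ℕ} (x y : Fin n → ℤ) : Prop :=
  ∀ i, 0 ≤ x i * y i ∧ |x i| ≤ |y i|

/-- The Graver basis of an integer matrix `A`: the `⊑`-minimal elements of
`{x ∈ ℤ^n : Ax = 0, x ≠ 0}`. -/
def graverBasis {m n : ℕ} (A : Matrix (Fin m) (Fin n) ℤ) : Set (Fin n → ℤ) :=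
  {g | g ≠ 0 ∧ A.mulVec g = 0 ∧
    ∀ y : Fin n → ℤ, y ≠ 0 → A.mulVec y = 0 → ConformalLE y g → y = g}

/-- Cast an integer vector to a real vector. -/
def castVec {n : ℕ} (g : Fin n → ℤ) : Fin n → ℝ := fun i => (g i : ℝ)

/-- The cone generated by a set: all nonnegative finite linear combinations. -/
def coneGen {E : Type*} [AddCommMonoid E] [SMul ℝ E] (S : Set E) : Set E :=
  {x | ∃ (k : ℕ) (μ : Fin k → ℝ) (v : Fin k → E),
    (∀ i, 0 ≤ μ i) ∧ (∀ i, v i ∈ S) ∧ x = ∑ i, μ i • v i}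

/-- Generators of the quadratic Graver cone:  `g hᵀ + h gᵀ` over distinct
Graver basis elements in the same orthant. -/
def quadGravGens {m n : ℕ} (A : Matrix (Fin m) (Fin n) ℤ) :
    Set (Matrix (Fin n) (Fin n) ℝ) :=
  {M | ∃ g h : Fin n → ℤ, g ∈ graverBasis A ∧ h ∈ graverBasis A ∧ g ≠ h ∧
    (∀ i, 0 ≤ g i * h i) ∧
    M = vecMulVec (castVec g) (castVec h) + vecMulVec (castVec h) (castVec g)}

/-- The quadratic Graver cone `Q(A)`. -/
def quadGraverCone {m n : ℕ} (A : Matrix (Fin m) (Fin n) ℤ) :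
    Set (Matrix (Fin n) (Fin n) ℝ) :=
  coneGen (quadGravGens A)

/-- Generators of the diagonal Graver cone: pointwise products `g ∘ h`. -/
def diagGravGens {m n : ℕ} (A : Matrix (Fin m) (Fin n) ℤ) : Set (Fin n → ℝ) :=
  {v | ∃ g h : Fin n → ℤ, g ∈ graverBasis A ∧ h ∈ graverBasis A ∧ g ≠ h ∧
    (∀ i, 0 ≤ g i * h i) ∧ v = castVec g * castVec h}

/-- The diagonal Graver cone `D(A)`. -/
def diagGraverCone {m n : ℕ} (A : Matrix (Fin m) (Fin n) ℤ) : Set (Fin n → ℝ) :=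
  coneGen (diagGravGens A)

/-- The Frobenius inner product of two matrices. -/
def frob {n : ℕ} (U V : Matrix (Fin n) (Fin n) ℝ) : ℝ := ∑ i, ∑ j, U i j * V i j

/-- The dual quadratic Graver cone `Q*(A)` (within symmetric matrices). -/
def dualQuadGraverCone {m n : ℕ} (A : Matrix (Fin m) (Fin n) ℤ) :
    Set (Matrix (Fin n) (Fin n) ℝ) :=
  {V | V.IsSymm ∧ ∀ U ∈ quadGraverCone A, 0 ≤ frob U V}

/-- The dual diagonal Graver cone `D*(A)`. -/
def dualDiagGraverCone {m n : ℕ} (A : Matrix (Fin m) (Fin n) ℤ) :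
    Set (Fin n → ℝ) :=
  {v | ∀ u ∈ diagGraverCone A, 0 ≤ u ⬝ᵥ v}

/-- A circuit of `A`: a nonzero integer kernel element with inclusion-minimal
support and relatively prime entries. -/
def isCircuit {m n : ℕ} (A : Matrix (Fin m) (Fin n) ℤ) (c : Fin n → ℤ) : Prop :=
  c ≠ 0 ∧ A.mulVec c = 0 ∧ Finset.univ.gcd c = 1 ∧
    ∀ y : Fin n → ℤ, y ≠ 0 → A.mulVec y = 0 →
      Function.support y ⊆ Function.support c →
      Function.support y = Function.support c

/-- If column `k` of `A` vanishes, then any Graver basis element that is nonzero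
at `k` is a signed unit vector at `k`. -/
lemma graver_single_of_col_zero {m n : ℕ} {A : Matrix (Fin m) (Fin n) ℤ} {k : Fin n}
    (hcol : ∀ i, A i k = 0) {w : Fin n → ℤ} (hw : w ∈ graverBasis A) (hwk : w k ≠ 0) :
    w = Pi.single k (if 0 < w k then (1 : ℤ) else -1) := by
  obtain ⟨hw0, hwker, hwmin⟩ := hw
  set s : ℤ := if 0 < w k then (1 : ℤ) else -1 with hs
  refine (hwmin (Pi.single k s) ?_ ?_ ?_).symm
  · intro h0
    have := congrFun h0 k
    simp only [Pi.single_eq_same, Pi.zero_apply, hs] at this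
    split_ifs at this
    all_goals omega
  · rw [Matrix.mulVec_single]
    funext i
    simp [hcol i]
  · intro i
    by_cases hi : i = k
    · subst hi
      simp only [Pi.single_eq_same, hs]
      constructor
      · split_ifs with h <;> nlinarith [hwk]
      · split_ifs <;> · simpa using Int.one_le_abs hwk
    · simp [Pi.single_eq_of_ne hi]

/-- Extract from a conformal circuit decomposition of `x` a circuit that is
nonzero at `k` and supported inside the support of `x`. -/
lemma exists_circuit_at {m n : ℕ} {A : Matrix (Fin m) (Fin n) ℤ}
    (hdecomp : ∀ x : Fin n → ℤ, x ≠ 0 → A.mulVec x = 0 →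
      ∃ (t : ℕ) (α : Fin t → ℝ) (c : Fin t → (Fin n → ℤ)),
        (∀ r, 0 ≤ α r) ∧ (∀ r, isCircuit A (c r)) ∧
        (∀ r i, 0 ≤ c r i * x i ∧ |c r i| ≤ |x i|) ∧
        castVec x = ∑ r, α r • castVec (c r))
    {x : Fin n → ℤ} {k : Fin n} (hx0 : x ≠ 0) (hker : A.mulVec x = 0) (hxk : x k ≠ 0) :
    ∃ c : Fin n → ℤ, isCircuit A c ∧ c k ≠ 0 ∧ ∀ j, x j = 0 → c j = 0 := by
  obtain ⟨t, α, c, hα, hcirc, hconf, hsum⟩ := hdecomp x hx0 hker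
  have hk' : (x k : ℝ) = ∑ r, α r * (c r k : ℝ) := by
    have := congrFun hsum k
    simpa [castVec, Finset.sum_apply] using this
  have hex : ∃ r, α r * (c r k : ℝ) ≠ 0 := by
    by_contra hc
    push_neg at hc
    rw [Finset.sum_eq_zero (fun r _ => hc r)] at hk'
    exact hxk (by exact_mod_cast hk')
  obtain ⟨r, hr⟩ := hex
  refine ⟨c r, hcirc r, ?_, ?_⟩
  · intro h0
    apply hr
    rw [h0]; simp
  · intro j hj
    have := (hconf r j).2
    rw [hj] at this
    simpa using (abs_nonpos_iff.mp (by simpa using this))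

/-- If the `k`-th unit vector lies in the diagonal Graver cone `D(A)`, then
there are two distinct matroid-circuits of `A` meeting exactly in `{k}`.
The conformal circuit decomposition property is assumed as a hypothesis. -/
theorem circuits_of_unit_mem_diagGraverCone {m n : ℕ}
    (A : Matrix (Fin m) (Fin n) ℤ)
    (hdecomp : ∀ x : Fin n → ℤ, x ≠ 0 → A.mulVec x = 0 →
      ∃ (t : ℕ) (α : Fin t → ℝ) (c : Fin t → (Fin n → ℤ)),
        (∀ r, 0 ≤ α r) ∧ (∀ r, isCircuit A (c r)) ∧
        (∀ r i, 0 ≤ c r i * x i ∧ |c r i| ≤ |x i|) ∧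
        castVec x = ∑ r, α r • castVec (c r))
    (k : Fin n) (hk : Pi.single k (1 : ℝ) ∈ diagGraverCone A) :
    ∃ c e : Fin n → ℤ, isCircuit A c ∧ isCircuit A e ∧
      Function.support c ≠ Function.support e ∧
      Function.support c ∩ Function.support e = {k} := by
  obtain ⟨N, μ, v, hμ, hv, hsum⟩ := hk
  -- each generator is pointwise nonnegative
  have hvnn : ∀ i j, 0 ≤ v i j := by
    intro i j
    obtain ⟨g, h, -, -, -, hgh, hvi⟩ := hv i
    rw [hvi]
    simp only [Pi.mul_apply, castVec]
    exact_mod_cast hgh j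
  have hcoord : ∀ j, (if j = k then (1 : ℝ) else 0) = ∑ i, μ i * v i j := by
    intro j
    have := congrFun hsum j
    simpa [Finset.sum_apply, Pi.single_apply] using this
  -- find a generator positive at k
  have hex : ∃ i, μ i * v i k ≠ 0 := by
    by_contra hc
    push_neg at hc
    have h1 := hcoord k
    rw [Finset.sum_eq_zero (fun i _ => hc i)] at h1
    simp at h1
  obtain ⟨i, hi⟩ := hex
  have hμi : μ i ≠ 0 := left_ne_zero_of_mul hi
  have hvik : v i k ≠ 0 := right_ne_zero_of_mul hi
  -- that generator vanishes off k
  have hzero : ∀ j, j ≠ k → v i j = 0 := by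
    intro j hj
    have h0 : ∑ i', μ i' * v i' j = 0 := by
      have h1 := (hcoord j).symm
      rwa [if_neg hj] at h1
    have := (Finset.sum_eq_zero_iff_of_nonneg
      (fun i' _ => mul_nonneg (hμ i') (hvnn i' j))).mp h0 i (Finset.mem_univ i)
    exact (mul_eq_zero.mp this).resolve_left hμi
  obtain ⟨g, h, hg, hh, hgne, hgh, hvi⟩ := hv i
  -- g k * h k > 0 and g j * h j = 0 for j ≠ k
  have hghk : g k * h k ≠ 0 := by
    intro h0
    apply hvik
    rw [hvi]
    simp only [Pi.mul_apply, castVec]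
    exact_mod_cast congrArg (Int.cast : ℤ → ℝ) h0
  have hgk : g k ≠ 0 := left_ne_zero_of_mul hghk
  have hhk : h k ≠ 0 := right_ne_zero_of_mul hghk
  have hghkpos : 0 < g k * h k := lt_of_le_of_ne (hgh k) (Ne.symm hghk)
  have horth : ∀ j, j ≠ k → g j = 0 ∨ h j = 0 := by
    intro j hj
    have := hzero j hj
    rw [hvi] at this
    simp only [Pi.mul_apply, castVec] at this
    have : (g j : ℝ) = 0 ∨ (h j : ℝ) = 0 := mul_eq_zero.mp this
    exact_mod_cast this
  -- column k of A is nonzero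
  have hcol : ∃ i0, A i0 k ≠ 0 := by
    by_contra hc
    push_neg at hc
    have hgeq := graver_single_of_col_zero hc hg hgk
    have hheq := graver_single_of_col_zero hc hh hhk
    apply hgne
    rw [hgeq, hheq]
    rcases mul_pos_iff.mp hghkpos with ⟨h1, h2⟩ | ⟨h1, h2⟩
    · rw [if_pos h1, if_pos h2]
    · rw [if_neg (not_lt.mpr h1.le), if_neg (not_lt.mpr h2.le)]
  obtain ⟨i0, hi0⟩ := hcol
  -- extract circuits from g and h
  obtain ⟨c, hc, hck, hcsupp⟩ := exists_circuit_at hdecomp hg.1 hg.2.1 hgk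
  obtain ⟨e, he, hek, hesupp⟩ := exists_circuit_at hdecomp hh.1 hh.2.1 hhk
  have hinter : Function.support c ∩ Function.support e = {k} := by
    ext j
    simp only [Set.mem_inter_iff, Function.mem_support, Set.mem_singleton_iff]
    constructor
    · rintro ⟨hcj, hej⟩
      by_contra hj
      rcases horth j hj with h0 | h0
      · exact hcj (hcsupp j h0)
      · exact hej (hesupp j h0)
    · rintro rfl
      exact ⟨hck, hek⟩
  refine ⟨c, e, hc, he, ?_, hinter⟩
  intro heq
  have hsuppc : Function.support c = {k} := by
    rw [← hinter, heq, Set.inter_self]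
  have : (A.mulVec c) i0 = A i0 k * c k := by
    simp only [Matrix.mulVec, dotProduct]
    apply Fintype.sum_eq_single
    intro j hj
    have hcj : c j = 0 := by
      by_contra hcj
      have hm : j ∈ Function.support c := Function.mem_support.mpr hcj
      rw [hsuppc] at hm
      exact hj hm
    simp [hcj]
  rw [hc.2.1] at this
  simp only [Pi.zero_apply] at this
  rcases mul_eq_zero.mp this.symm with h0 | h0
  · exact hi0 h0
  · exact hck h0
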